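/- arXiv:2509.01207 — 2 statements merged into one kernel-verified Lean document; each statement's English description precedes it below -/
import Mathlib

section
/- Let Φ : [t₀, t₂) → Mₙ(ℂ) be a solution of Φ'(t) = A(t)Φ(t), where A is continuous. Then for all t ∈ [t₀, t₂), det Φ(t) = det Φ(t₀) · exp(∫_{t₀}^{t} tr A(τ) dτ). In particular, if det Φ(t₀) ≠ 0 then det Φ(t) ≠ 0 for all t in the interval. -/
open Matrix
open scoped ComplexOrder

/-- The determinant as a continuous multilinear map in the rows. -/
noncomputable def detCMM (n : ℕ) :
    ContinuousMultilinearMap ℂ (fun _ : Fin n => (Fin n → ℂ)) ℂ :=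
  MultilinearMap.mkContinuous
    (Matrix.detRowAlternating (n := Fin n) (R := ℂ)).toMultilinearMap
    (Nat.factorial n) (by
      intro m
      show ‖Matrix.det (Matrix.of m)‖ ≤ _
      rw [Matrix.det_apply]
      refine (norm_sum_le _ _).trans ?_
      have hterm : ∀ σ : Equiv.Perm (Fin n),
          ‖Equiv.Perm.sign σ • ∏ i, Matrix.of m (σ i) i‖ ≤ ∏ i, ‖m i‖ := by
        intro σ
        have h1 : ‖Equiv.Perm.sign σ • ∏ i, Matrix.of m (σ i) i‖
            = ‖∏ i, m (σ i) i‖ := by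
          rcases Int.units_eq_one_or (Equiv.Perm.sign σ) with h | h <;>
            simp [h, Units.smul_def, Matrix.of_apply]
        rw [h1, norm_prod]
        calc ∏ i, ‖m (σ i) i‖ ≤ ∏ i, ‖m (σ i)‖ :=
              Finset.prod_le_prod (fun i _ => norm_nonneg _)
                (fun i _ => norm_le_pi_norm (m (σ i)) i)
          _ = ∏ i, ‖m i‖ := Equiv.prod_comp σ (fun i => ‖m i‖)
      refine (Finset.sum_le_card_nsmul _ _ _ (fun σ _ => hterm σ)).trans ?_
      rw [Finset.card_univ, Fintype.card_perm, Fintype.card_fin, nsmul_eq_mul])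

lemma hasDerivAt_det_matrix {n : ℕ} {Φ : ℝ → Matrix (Fin n) (Fin n) ℂ}
    {Φ' : Matrix (Fin n) (Fin n) ℂ} {t : ℝ}
    (h : ∀ i j, HasDerivAt (fun s => Φ s i j) (Φ' i j) t) :
    HasDerivAt (fun s => (Φ s).det)
      (∑ i, (Matrix.updateRow (Φ t) i (Φ' i)).det) t := by
  have hΦ : HasDerivAt (fun s => (fun i => Φ s i) : ℝ → (Fin n → (Fin n → ℂ)))
      (fun i => Φ' i) t := by
    refine hasDerivAt_pi.2 fun i => ?_
    exact hasDerivAt_pi.2 fun j => h i j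
  have H := (((detCMM n).hasFDerivAt (fun i => Φ t i)).restrictScalars ℝ).comp_hasDerivAt t hΦ
  convert H using 1
  · rfl
  · rfl
  simp only [ContinuousLinearMap.coe_restrictScalars',
    ContinuousMultilinearMap.linearDeriv_apply]
  rfl

/-- Liouville's formula for `Φ' = A(t) Φ` on `[t₀, t₂)`. -/
theorem liouville_formula (n : ℕ) (t₀ t₂ : ℝ)
    (A Φ : ℝ → Matrix (Fin n) (Fin n) ℂ)
    (hA : ContinuousOn A (Set.Ico t₀ t₂))
    (hΦ : ∀ t ∈ Set.Ico t₀ t₂, ∀ i j,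
      HasDerivAt (fun s => Φ s i j) ((A t * Φ t) i j) t) :
    ∀ t ∈ Set.Ico t₀ t₂,
      (Φ t).det = (Φ t₀).det * Complex.exp (∫ τ in t₀..t, (A τ).trace) ∧
        ((Φ t₀).det ≠ 0 → (Φ t).det ≠ 0) := by
  -- continuity of the trace of A
  have hT : ContinuousOn (fun τ => (A τ).trace) (Set.Ico t₀ t₂) :=
    (continuous_id.matrix_trace.comp_continuousOn hA)
  set F : ℝ → ℂ := fun x => ∫ τ in t₀..x, (A τ).trace with hF
  -- derivative of det ∘ Φ
  have hdet : ∀ x ∈ Set.Ico t₀ t₂,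
      HasDerivAt (fun s => (Φ s).det) ((A x).trace * (Φ x).det) x := by
    intro x hx
    have H := hasDerivAt_det_matrix (fun i j => hΦ x hx i j)
    convert H using 1
    have hrow : ∀ i, (A x * Φ x) i = ∑ k, A x i k • Φ x k := by
      intro i
      funext j
      simp [Matrix.mul_apply, Finset.sum_apply]
    calc (A x).trace * (Φ x).det = ∑ i, A x i i * (Φ x).det := by
          simp [Matrix.trace, Matrix.diag, Finset.sum_mul]
      _ = ∑ i, ((Φ x).updateRow i ((A x * Φ x) i)).det := by
          refine Finset.sum_congr rfl fun i _ => ?_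
          rw [hrow i, Matrix.det_updateRow_sum, smul_eq_mul]
  intro t ht
  obtain ⟨ht₀, ht₂⟩ := ht
  suffices hkey : (Φ t).det = (Φ t₀).det * Complex.exp (F t) by
    refine ⟨hkey, fun h0 => ?_⟩
    rw [hkey]
    exact mul_ne_zero h0 (Complex.exp_ne_zero _)
  -- constancy of h x = det (Φ x) * exp (-F x) on [t₀, t]
  have hsub : Set.Icc t₀ t ⊆ Set.Ico t₀ t₂ := fun y hy =>
    ⟨hy.1, lt_of_le_of_lt hy.2 ht₂⟩
  have hcont : ContinuousOn (fun x => (Φ x).det * Complex.exp (-(F x)))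
      (Set.Icc t₀ t) := by
    have h1 : ContinuousOn (fun x => (Φ x).det) (Set.Icc t₀ t) := fun y hy =>
      ((hdet y (hsub hy)).continuousAt).continuousWithinAt
    have h2 : ContinuousOn F (Set.Icc t₀ t) := by
      have hint : MeasureTheory.IntegrableOn (fun τ => (A τ).trace)
          (Set.uIcc t₀ t) := by
        rw [Set.uIcc_of_le ht₀]
        exact (hT.mono (hsub.trans (le_refl _))).mono
          (Set.Icc_subset_Icc le_rfl le_rfl) |>.integrableOn_Icc
      have := intervalIntegral.continuousOn_primitive_interval hint
      rwa [Set.uIcc_of_le ht₀] at this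
    exact h1.mul ((h2.neg).cexp)
  have hderiv : ∀ x ∈ Set.Ico t₀ t,
      HasDerivWithinAt (fun x => (Φ x).det * Complex.exp (-(F x))) 0
        (Set.Ici x) x := by
    intro x hx
    have hx' : x ∈ Set.Ico t₀ t₂ := ⟨hx.1, lt_trans hx.2 ht₂⟩
    -- derivative of F within Ici x
    have hFx : HasDerivWithinAt F ((A x).trace) (Set.Ici x) x := by
      have hintx : IntervalIntegrable (fun τ => (A τ).trace)
          MeasureTheory.volume t₀ x := by
        refine ContinuousOn.intervalIntegrable (hT.mono ?_)
        rw [Set.uIcc_of_le hx.1]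
        exact fun y hy => ⟨hy.1, lt_of_le_of_lt hy.2 hx'.2⟩
      have hmemIco : Set.Ico x t₂ ∈ nhdsWithin x (Set.Ici x) := by
        rw [← Set.Ici_inter_Iio]
        exact Filter.inter_mem self_mem_nhdsWithin
          (mem_nhdsWithin_of_mem_nhds (Iio_mem_nhds hx'.2))
      have hmemIoi : Set.Ico x t₂ ∈ nhdsWithin x (Set.Ioi x) :=
        nhdsWithin_mono x (Set.Ioi_subset_Ici le_rfl) hmemIco
      have hmeas : StronglyMeasurableAtFilter (fun τ => (A τ).trace)
          (nhdsWithin x (Set.Ioi x)) MeasureTheory.volume := by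
        refine ⟨Set.Ico x t₂, hmemIoi, ?_⟩
        exact (hT.mono fun y hy => ⟨le_trans hx.1 hy.1, hy.2⟩).aestronglyMeasurable
          measurableSet_Ico
      have hcw : ContinuousWithinAt (fun τ => (A τ).trace) (Set.Ioi x) x := by
        have := hT.continuousWithinAt hx'
        refine this.mono_of_mem_nhdsWithin ?_
        exact Filter.mem_of_superset hmemIoi fun y hy => ⟨le_trans hx.1 hy.1, hy.2⟩
      exact intervalIntegral.integral_hasDerivWithinAt_right hintx hmeas hcw
    have hexp : HasDerivWithinAt (fun s => Complex.exp (-(F s)))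
        (Complex.exp (-(F x)) * (-(A x).trace)) (Set.Ici x) x :=
      (hFx.neg).cexp
    have := ((hdet x hx').hasDerivWithinAt).mul hexp
    convert this using 1
    · rfl
    · rfl
    ring
  have hconst := constant_of_has_deriv_right_zero hcont hderiv t
    (Set.right_mem_Icc.2 ht₀)
  have hFt₀ : F t₀ = 0 := intervalIntegral.integral_same
  rw [hFt₀] at hconst
  simp only [neg_zero, Complex.exp_zero, mul_one] at hconst
  calc (Φ t).det = ((Φ t).det * Complex.exp (-(F t))) * Complex.exp (F t) := by
        rw [mul_assoc, ← Complex.exp_add, neg_add_cancel, Complex.exp_zero, mul_one]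
    _ = (Φ t₀).det * Complex.exp (F t) := by rw [hconst]
end

section
/- Let A, S : [t₀,∞) → Mₙ(ℂ) be continuous with S(t) Hermitian negative semidefinite, and let Z̃ solve the linear Lyapunov equation Z̃' + A*(t)Z̃ + Z̃A(t) + S(t) = 0 with Z̃(t₀) = Z₀ Hermitian positive semidefinite. Then Z̃(t) is Hermitian and positive semidefinite for all t ≥ t₀. -/
open Matrix Set
open scoped ComplexOrder

private lemma mulVec_norm_le {n : ℕ} (M : Matrix (Fin n) (Fin n) ℂ) {K : ℝ}
    (hK : (∑ i, ∑ j, ‖M i j‖) ≤ K) (u : Fin n → ℂ) : ‖M *ᵥ u‖ ≤ K * ‖u‖ := by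
  have hK0 : 0 ≤ K := le_trans (by positivity) hK
  rw [pi_norm_le_iff_of_nonneg (by positivity)]
  intro i
  calc ‖(M *ᵥ u) i‖ = ‖∑ j, M i j * u j‖ := rfl
    _ ≤ ∑ j, ‖M i j * u j‖ := norm_sum_le _ _
    _ ≤ ∑ j, ‖M i j‖ * ‖u‖ := by
        refine Finset.sum_le_sum fun j _ => ?_
        rw [norm_mul]
        exact mul_le_mul_of_nonneg_left (norm_le_pi_norm u j) (norm_nonneg _)
    _ = (∑ j, ‖M i j‖) * ‖u‖ := by rw [Finset.sum_mul]
    _ ≤ K * ‖u‖ := by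
        refine mul_le_mul_of_nonneg_right (le_trans ?_ hK) (norm_nonneg _)
        exact Finset.single_le_sum (f := fun i => ∑ j, ‖M i j‖)
          (fun i _ => by positivity) (Finset.mem_univ i)


private lemma continuous_mulVec_fixed {n : ℕ} {B : ℝ → Matrix (Fin n) (Fin n) ℂ}
    (hB : Continuous B) (y : Fin n → ℂ) : Continuous fun t => (B t) *ᵥ y := by
  refine continuous_pi fun i => ?_
  simp only [Matrix.mulVec, dotProduct]
  exact continuous_finset_sum _ fun j _ =>
    (((continuous_apply j).comp ((continuous_apply i).comp hB))).mul continuous_const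


private lemma hasDerivWithinAt_singleton' {F : Type*} [NormedAddCommGroup F] [NormedSpace ℝ F]
    (f : ℝ → F) (x : ℝ) (d : F) : HasDerivWithinAt f d {x} x := by
  rw [hasDerivWithinAt_iff_isLittleO, nhdsWithin_singleton, Asymptotics.isLittleO_pure]
  simp


private lemma exists_linear_sol {n : ℕ} (B : ℝ → Matrix (Fin n) (Fin n) ℂ) (hB : Continuous B)
    {a b : ℝ} (hab : a ≤ b) (x : Fin n → ℂ) :
    ∃ v : ℝ → (Fin n → ℂ), v b = x ∧
      ∀ t ∈ Icc a b, HasDerivWithinAt v ((B t) *ᵥ (v t)) (Icc a b) t := by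
  have hk : Continuous fun t => ∑ i, ∑ j, ‖B t i j‖ := by
    refine continuous_finset_sum _ fun i _ => continuous_finset_sum _ fun j _ => ?_
    exact ((continuous_apply j).comp ((continuous_apply i).comp hB)).norm
  obtain ⟨K₀, hK₀⟩ := (isCompact_Icc (a := a) (b := b)).exists_bound_of_continuousOn
    hk.continuousOn
  set K : ℝ := max K₀ 0 with hKdef
  have hK0 : 0 ≤ K := le_max_right _ _
  have hKb : ∀ t ∈ Icc a b, (∑ i, ∑ j, ‖B t i j‖) ≤ K := fun t ht =>
    le_trans (le_abs_self _) (le_trans (hK₀ t ht) (le_max_left _ _))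
  set δ : ℝ := 1 / (2 * K + 1) with hδdef
  have hδ0 : 0 < δ := by positivity
  have main : ∀ k : ℕ, ∀ s, a ≤ s → s ≤ b → b - s ≤ k * δ →
      ∃ v : ℝ → (Fin n → ℂ), v b = x ∧
        ∀ t ∈ Icc s b, HasDerivWithinAt v ((B t) *ᵥ (v t)) (Icc s b) t := by
    intro k
    induction k with
    | zero =>
      intro s has hsb hbs
      have hsb' : s = b := le_antisymm hsb (by simpa using hbs)
      subst hsb'
      refine ⟨fun _ => x, rfl, fun t ht => ?_⟩
      rw [Icc_self] at ht ⊢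
      simp only [mem_singleton_iff] at ht
      subst ht
      exact hasDerivWithinAt_singleton' _ _ _
    | succ k ih =>
      intro s has hsb hbs
      set s₁ : ℝ := min b (s + δ) with hs₁def
      have has₁ : a ≤ s₁ := le_min (has.trans hsb) (by linarith)
      have hs₁b : s₁ ≤ b := min_le_left _ _
      have hss₁ : s ≤ s₁ := le_min hsb (by linarith)
      have hbs₁ : b - s₁ ≤ k * δ := by
        have hk0 : (0:ℝ) ≤ k * δ := mul_nonneg (Nat.cast_nonneg k) hδ0.le
        rcases min_cases b (s + δ) with ⟨h1, _⟩ | ⟨h1, _⟩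
        · rw [hs₁def, h1]; linarith
        · rw [hs₁def, h1]; push_cast at hbs ⊢; linarith
      obtain ⟨v, hvb, hv⟩ := ih s₁ has₁ hs₁b hbs₁
      rcases eq_or_lt_of_le hss₁ with heq | hlt
      · exact ⟨v, hvb, by rw [heq]; exact hv⟩
      have hsub : Icc s s₁ ⊆ Icc a b := Icc_subset_Icc has hs₁b
      set r : ℝ := ‖v s₁‖ with hrdef
      have hr0 : 0 ≤ r := norm_nonneg _
      have hpl : IsPicardLindelof (fun t y => (B t) *ᵥ y) (tmin := s) (tmax := s₁)
          ⟨s₁, hss₁, le_refl _⟩ (v s₁)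
          ⟨r + 1, by positivity⟩ 0 ⟨K * (2 * r + 1), by positivity⟩ K.toNNReal := by
        constructor
        · intro t ht
          refine LipschitzOnWith.of_dist_le_mul fun y _ z _ => ?_
          rw [dist_eq_norm, dist_eq_norm, ← Matrix.mulVec_sub]
          rw [Real.coe_toNNReal _ hK0]
          exact mulVec_norm_le _ (hKb t (hsub ht)) _
        · intro y _
          exact (continuous_mulVec_fixed hB y).continuousOn
        · intro t ht y hy
          have hy' : ‖y‖ ≤ 2 * r + 1 := by
            have h1 := mem_closedBall_iff_norm.mp hy
            change ‖y - v s₁‖ ≤ r + 1 at h1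
            have h2 := norm_add_le (y - v s₁) (v s₁)
            simp only [sub_add_cancel] at h2
            rw [← hrdef] at *
            linarith
          calc ‖(B t) *ᵥ y‖ ≤ K * ‖y‖ := mulVec_norm_le _ (hKb t (hsub ht)) _
            _ ≤ K * (2 * r + 1) := mul_le_mul_of_nonneg_left hy' hK0
        · simp only [NNReal.coe_mk, tsub_zero, NNReal.coe_zero, sub_zero]
          have h1 : max (s₁ - s₁) (s₁ - s) = s₁ - s := by
            rw [max_eq_right]; linarith
          rw [h1]
          have h2 : s₁ - s ≤ δ := by
            have := min_le_right b (s + δ); rw [← hs₁def] at this; linarith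
          calc K * (2 * r + 1) * (s₁ - s) ≤ K * (2 * r + 1) * δ :=
                mul_le_mul_of_nonneg_left h2 (by positivity)
            _ ≤ r + 1 := by
                rw [hδdef, mul_one_div, div_le_iff₀ (by positivity)]
                nlinarith
      obtain ⟨w, hws₁, hw⟩ := hpl.exists_eq_forall_mem_Icc_hasDerivWithinAt₀
      change w s₁ = v s₁ at hws₁
      -- glue
      set u : ℝ → (Fin n → ℂ) := fun t => if t < s₁ then w t else v t with hudef
      have huv : ∀ t ∈ Icc s₁ b, u t = v t := by
        intro t ht
        rw [hudef]
        simp only [if_neg (not_lt.mpr ht.1)]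
      have huw : ∀ t ∈ Icc s s₁, u t = w t := by
        intro t ht
        rcases lt_or_eq_of_le ht.2 with h | h
        · rw [hudef]; simp only [if_pos h]
        · subst h; simp [hudef, hws₁]
      refine ⟨u, ?_, ?_⟩
      · rw [huv b ⟨hs₁b, le_refl b⟩, hvb]
      intro t ht
      rcases lt_trichotomy t s₁ with h | h | h
      · -- t < s₁, use w
        have htm : t ∈ Icc s s₁ := ⟨ht.1, h.le⟩
        have h1 : HasDerivWithinAt u ((B t) *ᵥ (u t)) (Icc s s₁) t := by
          have := (hw t htm).congr huw (huw t htm)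
          rwa [huw t htm]
        refine h1.mono_of_mem_nhdsWithin ?_
        refine Filter.mem_of_superset (inter_mem_nhdsWithin _ (Iio_mem_nhds h)) ?_
        rintro y ⟨hy1, hy2⟩
        exact ⟨hy1.1, le_of_lt hy2⟩
      · -- t = s₁
        have hts : t ∈ Icc s s₁ := ⟨ht.1, h.le⟩
        have htb : t ∈ Icc s₁ b := ⟨h.ge, ht.2⟩
        have h1 : HasDerivWithinAt u ((B t) *ᵥ (u t)) (Icc s s₁) t := by
          have := (hw t hts).congr huw (huw t hts)
          rwa [huw t hts]
        have h2 : HasDerivWithinAt u ((B t) *ᵥ (u t)) (Icc s₁ b) t := by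
          have := (hv t htb).congr huv (huv t htb)
          rwa [huv t htb]
        have h3 := h1.union h2
        rwa [Icc_union_Icc_eq_Icc hss₁ hs₁b] at h3
      · -- t > s₁, use v
        have htm : t ∈ Icc s₁ b := ⟨h.le, ht.2⟩
        have h1 : HasDerivWithinAt u ((B t) *ᵥ (u t)) (Icc s₁ b) t := by
          have := (hv t htm).congr huv (huv t htm)
          rwa [huv t htm]
        refine h1.mono_of_mem_nhdsWithin ?_
        refine Filter.mem_of_superset (inter_mem_nhdsWithin _ (Ioi_mem_nhds h)) ?_
        rintro y ⟨hy1, hy2⟩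
        exact ⟨le_of_lt hy2, hy1.2⟩
  obtain ⟨v, hvb, hv⟩ := main ⌈(b - a) / δ⌉₊ a le_rfl hab (by
    have h1 := Nat.le_ceil ((b - a) / δ)
    rw [div_le_iff₀ hδ0] at h1
    linarith)
  exact ⟨v, hvb, hv⟩

private lemma conj_star_dot {n : ℕ} (a b : Fin n → ℂ) :
    (starRingEnd ℂ) (star a ⬝ᵥ b) = star b ⬝ᵥ a := by
  simp [dotProduct, map_sum, mul_comm]


private lemma isHermitian_of_real_quad {n : ℕ} (M : Matrix (Fin n) (Fin n) ℂ)
    (h : ∀ x : Fin n → ℂ, (starRingEnd ℂ) (star x ⬝ᵥ (M *ᵥ x)) = star x ⬝ᵥ (M *ᵥ x)) :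
    M.IsHermitian := by
  rw [Matrix.isHermitian_iff_isSymmetric, LinearMap.isSymmetric_iff_inner_map_self_real]
  intro v
  have h1 : (inner ℂ (Matrix.toEuclideanLin M v) v : ℂ)
      = star (M *ᵥ (WithLp.equiv 2 (Fin n → ℂ) v)) ⬝ᵥ (WithLp.equiv 2 (Fin n → ℂ) v) := by
    rw [EuclideanSpace.inner_eq_star_dotProduct, dotProduct_comm]; rfl
  rw [h1, conj_star_dot]
  set x := WithLp.equiv 2 (Fin n → ℂ) v
  have := h x
  rw [← this, conj_star_dot]


private lemma quad_identity {n : ℕ} (A Z S : Matrix (Fin n) (Fin n) ℂ) (x : Fin n → ℂ) :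
    (∑ i, (star ((A *ᵥ x) i) * ∑ j, Z i j * x j
      + star (x i) * ∑ j, ((-(Aᴴ * Z + Z * A + S)) i j * x j + Z i j * ((A *ᵥ x) j))))
    = star x ⬝ᵥ ((-S) *ᵥ x) := by
  have h1 : (∑ i, (star ((A *ᵥ x) i) * ∑ j, Z i j * x j
      + star (x i) * ∑ j, ((-(Aᴴ * Z + Z * A + S)) i j * x j + Z i j * ((A *ᵥ x) j))))
      = star (A *ᵥ x) ⬝ᵥ (Z *ᵥ x) + (star x ⬝ᵥ ((-(Aᴴ * Z + Z * A + S)) *ᵥ x)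
        + star x ⬝ᵥ (Z *ᵥ (A *ᵥ x))) := by
    simp [dotProduct, mulVec, mul_add, Finset.sum_add_distrib, Finset.mul_sum]
  rw [h1, Matrix.star_mulVec, Matrix.dotProduct_mulVec _ Z, Matrix.vecMul_vecMul,
    Matrix.mulVec_mulVec, Matrix.dotProduct_mulVec _ (Z * A),
    Matrix.dotProduct_mulVec _ (-(Aᴴ * Z + Z * A + S)), Matrix.dotProduct_mulVec _ (-S)]
  rw [show -(Aᴴ * Z + Z * A + S) = -S - Aᴴ * Z - Z * A by abel]
  rw [Matrix.vecMul_sub, Matrix.vecMul_sub, sub_dotProduct, sub_dotProduct]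
  ring

/-- Solutions of the Lyapunov equation `Z' + A* Z + Z A + S = 0` with `S ≤ 0` and
`Z(t₀) ≥ 0` stay Hermitian positive semidefinite. -/
theorem lyapunov_posSemidef (n : ℕ) (t₀ : ℝ)
    (A S Z : ℝ → Matrix (Fin n) (Fin n) ℂ)
    (Z₀ : Matrix (Fin n) (Fin n) ℂ)
    (hA : ContinuousOn A (Set.Ici t₀)) (hS : ContinuousOn S (Set.Ici t₀))
    (hSneg : ∀ t, t₀ ≤ t → (-(S t)).PosSemidef)
    (hZ₀ : Z₀.PosSemidef) (hZt₀ : Z t₀ = Z₀)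
    (hZ : ∀ t ∈ Set.Ici t₀, ∀ i j,
      HasDerivAt (fun s => Z s i j)
        ((-((A t)ᴴ * Z t + Z t * A t + S t)) i j) t) :
    ∀ t ∈ Set.Ici t₀, (Z t).PosSemidef := by
  intro T hT
  rw [mem_Ici] at hT
  have hBc : Continuous (fun t => A (max t t₀)) :=
    hA.comp_continuous (continuous_id.max continuous_const) (fun x => mem_Ici.mpr (le_max_right _ _))
  have key : ∀ x : Fin n → ℂ, 0 ≤ star x ⬝ᵥ ((Z T) *ᵥ x) := by
    intro x
    obtain ⟨v, hvb, hv⟩ := exists_linear_sol _ hBc hT x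
    set F : ℝ → ℂ := fun s => ∑ i, star (v s i) * ∑ j, Z s i j * v s j with hFdef
    have hFq : ∀ s, F s = star (v s) ⬝ᵥ ((Z s) *ᵥ (v s)) := fun s => by
      simp [hFdef, dotProduct, mulVec]
    have hq : ∀ t ∈ Icc t₀ T, 0 ≤ star (v t) ⬝ᵥ ((-(S t)) *ᵥ (v t)) :=
      fun t ht => (hSneg t ht.1).dotProduct_mulVec_nonneg (v t)
    have hF' : ∀ t ∈ Icc t₀ T,
        HasDerivWithinAt F (star (v t) ⬝ᵥ ((-(S t)) *ᵥ (v t))) (Icc t₀ T) t := by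
      intro t ht
      have hBt : A (max t t₀) = A t := by rw [max_eq_left ht.1]
      have hd : HasDerivWithinAt v ((A t) *ᵥ (v t)) (Icc t₀ T) t := by
        have := hv t ht; rwa [hBt] at this
      have hdi := hasDerivWithinAt_pi.mp hd
      have hbuilt : HasDerivWithinAt F
          (∑ i, (star (((A t) *ᵥ (v t)) i) * ∑ j, Z t i j * v t j
            + star (v t i) * ∑ j, ((-((A t)ᴴ * Z t + Z t * A t + S t)) i j * v t j
              + Z t i j * (((A t) *ᵥ (v t)) j)))) (Icc t₀ T) t := by
        refine HasDerivWithinAt.fun_sum fun i _ => ?_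
        refine HasDerivWithinAt.mul ((hdi i).star) ?_
        refine HasDerivWithinAt.fun_sum fun j _ => ?_
        exact ((hZ t ht.1 i j).hasDerivWithinAt).mul (hdi j)
      rwa [quad_identity (A t) (Z t) (S t) (v t)] at hbuilt
    have hcont : ContinuousOn F (Icc t₀ T) := fun s hs => (hF' s hs).continuousWithinAt
    have hmono : MonotoneOn (fun s => (F s).re) (Icc t₀ T) := by
      refine monotoneOn_of_hasDerivWithinAt_nonneg (convex_Icc _ _)
        (Complex.continuous_re.comp_continuousOn hcont)
        (f' := fun t => (star (v t) ⬝ᵥ ((-(S t)) *ᵥ (v t))).re) ?_ ?_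
      · intro z hz
        rw [interior_Icc] at hz
        have h0 := (hF' z (Ioo_subset_Icc_self hz)).mono (interior_Icc (a := t₀) (b := T) ▸ interior_subset)
        have := Complex.reCLM.hasFDerivAt.comp_hasDerivWithinAt (x := z) h0
        rw [interior_Icc]
        simpa [Function.comp_def] using this
      · intro z hz
        rw [interior_Icc] at hz
        exact (Complex.le_def.mp (hq z (Ioo_subset_Icc_self hz))).1
    have hconst : ∀ s ∈ Icc t₀ T, (F s).im = (F t₀).im := by
      refine constant_of_has_deriv_right_zero (Complex.continuous_im.comp_continuousOn hcont) ?_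
      intro z hz
      have h0 := hF' z ⟨hz.1, hz.2.le⟩
      have h1 := Complex.imCLM.hasFDerivAt.comp_hasDerivWithinAt (x := z) h0
      have him0 : (star (v z) ⬝ᵥ ((-(S z)) *ᵥ (v z))).im = 0 :=
        ((Complex.le_def.mp (hq z ⟨hz.1, hz.2.le⟩)).2).symm
      have h2 : HasDerivWithinAt (fun s => (F s).im) 0 (Icc t₀ T) z := by
        simpa [Function.comp_def, him0] using h1
      refine h2.mono_of_mem_nhdsWithin ?_
      refine Filter.mem_of_superset (inter_mem_nhdsWithin _ (Iio_mem_nhds hz.2)) ?_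
      rintro y ⟨hy1, hy2⟩
      exact ⟨hz.1.trans hy1, hy2.le⟩
    have hmem0 : t₀ ∈ Icc t₀ T := ⟨le_refl _, hT⟩
    have hmemT : T ∈ Icc t₀ T := ⟨hT, le_refl _⟩
    have hF0 : 0 ≤ F t₀ := by rw [hFq, hZt₀]; exact hZ₀.dotProduct_mulVec_nonneg (v t₀)
    have hFb : F T = star x ⬝ᵥ ((Z T) *ᵥ x) := by rw [hFq, hvb]
    rw [← hFb, Complex.le_def]
    constructor
    · have := hmono hmem0 hmemT hT
      have h0 := (Complex.le_def.mp hF0).1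
      simp only [Complex.zero_re] at h0 ⊢
      linarith
    · have := hconst T hmemT
      have h0 := (Complex.le_def.mp hF0).2
      simp only [Complex.zero_im] at h0 ⊢
      rw [this, ← h0]
  have herm : (Z T).IsHermitian := by
    refine isHermitian_of_real_quad _ fun x => ?_
    have := key x
    exact Complex.conj_eq_iff_im.mpr ((Complex.le_def.mp this).2.symm)
  exact .of_dotProduct_mulVec_nonneg herm key
end
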